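/- If Λ = {λ₁, λ₂, …, λₙ} is the spectrum of an n×n centrosymmetric nonnegative matrix with Perron eigenvalue λ₁, then for every ε > 0, the list {λ₁+ε, λ₂, …, λₙ} is also the spectrum of an n×n centrosymmetric nonnegative matrix. -/

import Mathlib

open Matrix Polynomial

/-- The n×n exchange (counteridentity) matrix. -/
def Jmat (n : ℕ) : Matrix (Fin n) (Fin n) ℝ :=
  Matrix.of fun i j => if (i : ℕ) + (j : ℕ) = n - 1 then 1 else 0

section JmatLemmas
variable {n : ℕ}

lemma Jmat_apply (i j : Fin n) : Jmat n i j = if (i : ℕ) + (j : ℕ) = n - 1 then 1 else 0 := rfl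

lemma Jmat_eq_cond (i j : Fin n) : ((i : ℕ) + (j : ℕ) = n - 1) ↔ j = i.rev := by
  have hi := i.2; have hj := j.2
  constructor
  · intro h; ext; rw [Fin.val_rev]; omega
  · intro h; subst h; rw [Fin.val_rev]; omega

lemma Jmat_mulVec (x : Fin n → ℝ) (i : Fin n) : (Jmat n *ᵥ x) i = x i.rev := by
  rw [mulVec, dotProduct]
  rw [Finset.sum_eq_single i.rev]
  · have hc : (i : ℕ) + (i.rev : ℕ) = n - 1 := by rw [Fin.val_rev]; have := i.2; omega
    simp only [Jmat_apply, of_apply, hc, if_pos, one_mul]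
  · intro b _ hb; simp [Jmat_apply, Jmat_eq_cond, hb]
  · simp
lemma Jmat_mul_apply (P : Matrix (Fin n) (Fin n) ℝ) (i j : Fin n) :
    (Jmat n * P) i j = P i.rev j := by
  rw [mul_apply]
  rw [Finset.sum_eq_single i.rev]
  · have hc : (i : ℕ) + (i.rev : ℕ) = n - 1 := by rw [Fin.val_rev]; have := i.2; omega
    simp only [Jmat_apply, of_apply, hc, if_pos, one_mul]
  · intro b _ hb; simp [Jmat_apply, Jmat_eq_cond, hb]
  · simp
lemma mul_Jmat_apply (P : Matrix (Fin n) (Fin n) ℝ) (i j : Fin n) :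
    (P * Jmat n) i j = P i j.rev := by
  rw [mul_apply]
  rw [Finset.sum_eq_single j.rev]
  · have hc : ((j.rev : ℕ) + (j : ℕ) = n - 1) := by rw [Fin.val_rev]; have := j.2; omega
    simp only [Jmat_apply, of_apply, hc, if_pos, mul_one]
  · intro b _ hb
    have hcc : ¬ ((b : ℕ) + (j : ℕ) = n - 1) := by
      intro h; apply hb; ext; rw [Fin.val_rev]; have := b.2; have := j.2; omega
    simp only [Jmat_apply, of_apply, hcc, if_neg, not_false_iff, mul_zero]
  · simp

end JmatLemmas

section Analytic
open Filter
attribute [local instance] Matrix.linftyOpNormedRing Matrix.linftyOpNormedAlgebra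
  Matrix.linftyOpNormedAddCommGroup


section Geom
variable {A : Type*} [NormedRing A] [CompleteSpace A]

lemma geom_inv_left (a : A) (h : Summable fun k : ℕ => a ^ k) :
    (1 - a) * (∑' k : ℕ, a ^ k) = 1 := by
  have h1 : (∑' k : ℕ, a ^ k) = 1 + ∑' k : ℕ, a ^ (k + 1) := by
    simpa using Summable.tsum_eq_zero_add h
  have h2 : (∑' k : ℕ, a ^ (k + 1)) = a * ∑' k : ℕ, a ^ k := by
    simp_rw [pow_succ']
    exact h.tsum_mul_left a
  rw [sub_mul, one_mul, ← h2]
  conv_lhs => rw [h1]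
  rw [add_sub_cancel_right]

lemma geom_inv_right (a : A) (h : Summable fun k : ℕ => a ^ k) :
    (∑' k : ℕ, a ^ k) * (1 - a) = 1 := by
  have h1 : (∑' k : ℕ, a ^ k) = 1 + ∑' k : ℕ, a ^ (k + 1) := by
    simpa using Summable.tsum_eq_zero_add h
  have h2 : (∑' k : ℕ, a ^ (k + 1)) = (∑' k : ℕ, a ^ k) * a := by
    simp_rw [pow_succ]
    exact h.tsum_mul_right a
  rw [mul_sub, mul_one, ← h2]
  conv_lhs => rw [h1]
  rw [add_sub_cancel_right]

end Geom

-- Gelfand: eventual norm bound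
lemma pow_norm_eventually_le {n : ℕ} (A : Matrix (Fin n) (Fin n) ℂ) {r : NNReal}
    (h : spectralRadius ℂ A < r) :
    ∀ᶠ k in atTop, ‖A ^ k‖₊ ≤ r ^ k := by
  have hg := spectrum.pow_nnnorm_pow_one_div_tendsto_nhds_spectralRadius A
  have hev : ∀ᶠ k : ℕ in atTop, ((‖A ^ k‖₊ : ENNReal) ^ (1 / (k:ℝ)) : ENNReal) < r :=
    hg.eventually_lt_const h
  filter_upwards [hev, eventually_ge_atTop 1] with k hk hk1
  have hkne : (k : ℝ) ≠ 0 := by positivity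
  have := ENNReal.rpow_le_rpow hk.le (by positivity : (0:ℝ) ≤ (k:ℝ))
  rw [← ENNReal.rpow_mul, one_div, inv_mul_cancel₀ hkne, ENNReal.rpow_one,
    ENNReal.rpow_natCast] at this
  exact_mod_cast this

lemma pow_entry_nonneg {n : ℕ} (M : Matrix (Fin n) (Fin n) ℝ) (hnn : ∀ i j, 0 ≤ M i j) :
    ∀ k i j, 0 ≤ (M ^ k) i j := by
  intro k
  induction k with
  | zero => intro i j; simp [Matrix.one_apply]; split_ifs <;> norm_num
  | succ k ih =>
    intro i j
    rw [pow_succ, Matrix.mul_apply]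
    exact Finset.sum_nonneg fun l _ => mul_nonneg (ih i l) (hnn l j)

lemma map_pow_ofReal {n : ℕ} (M : Matrix (Fin n) (Fin n) ℝ) (k : ℕ) :
    (M ^ k).map Complex.ofReal = (M.map Complex.ofReal) ^ k := by
  induction k with
  | zero => ext i j; simp [Matrix.one_apply]; split_ifs <;> simp
  | succ k ih =>
    rw [pow_succ, pow_succ, ← ih]
    exact Matrix.map_mul (f := Complex.ofRealHom)

lemma resolvent_nonneg {n : ℕ} (M : Matrix (Fin n) (Fin n) ℝ) (hnn : ∀ i j, 0 ≤ M i j)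
    (t : ℝ) (ht0 : 0 < t)
    (hsr : spectralRadius ℂ (M.map Complex.ofReal) < ENNReal.ofReal t) :
    ∃ R : Matrix (Fin n) (Fin n) ℝ, (∀ i j, 0 ≤ R i j) ∧
      R * (t • 1 - M) = 1 ∧ (t • 1 - M) * R = 1 := by
  set A := M.map Complex.ofReal with hA
  obtain ⟨r, hr1, hr2⟩ := ENNReal.lt_iff_exists_nnreal_btwn.mp hsr
  have hrt : (r : ℝ) < t := by
    have := (ENNReal.coe_lt_coe.mp (by rwa [ENNReal.ofReal] at hr2))
    have h2 : (r : ℝ) < max t 0 := by exact_mod_cast this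
    simpa [max_eq_left ht0.le] using h2
  have hev := pow_norm_eventually_le A hr1
  set a := ((t : ℂ))⁻¹ • A with ha
  have hapow : ∀ k : ℕ, a ^ k = (((t : ℂ))⁻¹) ^ k • A ^ k := fun k => smul_pow _ _ _
  have hsum : Summable fun k : ℕ => a ^ k := by
    apply Summable.of_norm_bounded_eventually_nat (g := fun k => ((r : ℝ) / t) ^ k)
    · exact summable_geometric_of_lt_one (by positivity) (by rw [div_lt_one ht0]; exact hrt)
    · filter_upwards [hev] with k hk
      have h1 : ‖(((t:ℂ))⁻¹) ^ k‖ = (t⁻¹) ^ k := by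
        rw [norm_pow]
        simp [norm_inv, Complex.norm_real, abs_of_pos ht0]
      have h2 : ‖A ^ k‖ ≤ (r : ℝ) ^ k := by exact_mod_cast hk
      calc ‖a ^ k‖ = (t⁻¹) ^ k * ‖A ^ k‖ := by rw [hapow, norm_smul, h1]
        _ ≤ (t⁻¹) ^ k * (r : ℝ) ^ k := by
            apply mul_le_mul_of_nonneg_left h2 (by positivity)
        _ = ((r : ℝ) / t) ^ k := by
            rw [div_pow, div_eq_mul_inv, inv_pow]; ring
  set S := ∑' k : ℕ, a ^ k with hS
  have hL := geom_inv_left a hsum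
  have hR := geom_inv_right a hsum
  have hBfact : ((t : ℂ)) • (1 - a) = (t : ℂ) • (1 : Matrix (Fin n) (Fin n) ℂ) - A := by
    rw [smul_sub, ha, smul_smul, mul_inv_cancel₀ (by exact_mod_cast ht0.ne'), one_smul]
  -- entries of S are nonneg reals
  have hentry : ∀ i j, ∃ g : ℝ, 0 ≤ g ∧ S i j = (g : ℂ) := by
    intro i j
    let E : Matrix (Fin n) (Fin n) ℂ →ₗ[ℂ] ℂ := Matrix.entryLinearMap ℂ ℂ i j
    let Ec : Matrix (Fin n) (Fin n) ℂ →L[ℂ] ℂ := ⟨E, E.continuous_of_finiteDimensional⟩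
    have hmap : Ec S = ∑' k : ℕ, Ec (a ^ k) := Ec.map_tsum hsum
    have hterm : ∀ k : ℕ, Ec (a ^ k) = (((t⁻¹) ^ k * (M ^ k) i j : ℝ) : ℂ) := by
      intro k
      have : Ec (a ^ k) = (((t:ℂ))⁻¹) ^ k * (A ^ k) i j := by
        rw [hapow]; simp [Ec, E, Matrix.entryLinearMap]; exact Or.inl rfl
      rw [this, ← map_pow_ofReal]
      show ((t:ℂ))⁻¹ ^ k * (((M ^ k) i j : ℝ) : ℂ) = _
      push_cast
      ring
    set g : ℕ → ℝ := fun k => (t⁻¹) ^ k * (M ^ k) i j with hg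
    have hsumE : Summable fun k => Ec (a ^ k) := Ec.summable hsum
    have hsumg : Summable g := by
      have : Summable fun k => ((g k : ℂ)) := by
        apply hsumE.congr; intro k; rw [hterm]
      have h2 := Complex.reCLM.summable this
      apply h2.congr; intro k; simp
    refine ⟨∑' k, g k, tsum_nonneg fun k => ?_, ?_⟩
    · exact mul_nonneg (by positivity) (pow_entry_nonneg M hnn k i j)
    · have : (Ec S : ℂ) = S i j := rfl
      rw [← this, hmap, Complex.ofReal_tsum]
      exact tsum_congr fun k => (hterm k)
  -- real matrix R
  set Rc : Matrix (Fin n) (Fin n) ℂ := ((t : ℂ))⁻¹ • S with hRc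
  set R : Matrix (Fin n) (Fin n) ℝ := Matrix.of fun i j => (Rc i j).re with hRdef
  have hRmap : R.map Complex.ofReal = Rc := by
    ext i j
    obtain ⟨g, hg0, hgeq⟩ := hentry i j
    simp only [Matrix.map_apply, hRdef, Matrix.of_apply, hRc, Matrix.smul_apply, hgeq]
    push_cast
    simp [Complex.ext_iff]
  have hRnn : ∀ i j, 0 ≤ R i j := by
    intro i j
    obtain ⟨g, hg0, hgeq⟩ := hentry i j
    simp only [hRdef, Matrix.of_apply, hRc, Matrix.smul_apply, hgeq, smul_eq_mul]
    rw [show ((t:ℂ))⁻¹ * (g : ℂ) = (((t⁻¹ * g : ℝ)) : ℂ) by push_cast; ring]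
    simp only [Complex.ofReal_re]
    positivity
  have hBmap : (t • (1 : Matrix (Fin n) (Fin n) ℝ) - M).map Complex.ofReal
      = (t : ℂ) • (1 : Matrix (Fin n) (Fin n) ℂ) - A := by
    ext i j
    simp only [Matrix.map_apply, Matrix.sub_apply, Matrix.smul_apply, Matrix.one_apply, hA]
    split_ifs <;> simp [smul_eq_mul] <;> push_cast <;> ring
  have key : ∀ X Y : Matrix (Fin n) (Fin n) ℝ, X.map Complex.ofReal = Y.map Complex.ofReal → X = Y := by
    intro X Y h
    ext i j
    have := congrFun (congrFun (congrArg (fun Z => Z) h) i) j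
    simpa [Matrix.map_apply, Complex.ofReal_inj] using
      congrFun (congrFun h i) j
  have hmul1 : Rc * ((t:ℂ) • 1 - A) = 1 := by
    rw [← hBfact, hRc, Algebra.mul_smul_comm, Matrix.smul_mul, smul_smul,
      mul_inv_cancel₀ (by exact_mod_cast ht0.ne' : (t:ℂ) ≠ 0), one_smul]
    exact hR
  have hmul2 : ((t:ℂ) • 1 - A) * Rc = 1 := by
    rw [← hBfact, hRc, Matrix.smul_mul, Algebra.mul_smul_comm, smul_smul,
      mul_inv_cancel₀ (by exact_mod_cast ht0.ne' : (t:ℂ) ≠ 0), one_smul]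
    exact hL
  have hmm : ∀ X Y : Matrix (Fin n) (Fin n) ℝ,
      (X * Y).map Complex.ofReal = X.map Complex.ofReal * Y.map Complex.ofReal := by
    intro X Y
    exact Matrix.map_mul (f := Complex.ofRealHom)
  have hone : (1 : Matrix (Fin n) (Fin n) ℝ).map Complex.ofReal = 1 := by
    ext i j
    simp only [Matrix.map_apply, Matrix.one_apply]
    split_ifs <;> simp
  refine ⟨R, hRnn, ?_, ?_⟩
  · apply key
    rw [hmm, hone, hRmap, hBmap, hmul1]
  · apply key
    rw [hmm, hone, hRmap, hBmap, hmul2]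

lemma eval_cp {n : ℕ} (A : Matrix (Fin n) (Fin n) ℂ) (z : ℂ) :
    (A.charpoly).eval z = (z • (1 : Matrix (Fin n) (Fin n) ℂ) - A).det := by
  rw [Matrix.charpoly, ← Polynomial.coe_evalRingHom, RingHom.map_det]
  congr 1
  ext i j
  by_cases h : i = j <;> simp [charmatrix_apply, h, Matrix.one_apply, diagonal_apply]

lemma spectralRadius_le_of_charpoly {n : ℕ} (lam : Fin n → ℂ) (A : Matrix (Fin n) (Fin n) ℂ)
    (hchar : A.charpoly = ∏ i, (X - C (lam i))) (l : ℝ)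
    (hl : ∀ i, ‖lam i‖ ≤ l) :
    spectralRadius ℂ A ≤ ENNReal.ofReal l := by
  rw [spectralRadius]
  apply iSup₂_le
  intro z hz
  have hdet : (A.charpoly).eval z = 0 := by
    by_contra h
    rw [spectrum.mem_iff] at hz
    apply hz
    have halg : algebraMap ℂ (Matrix (Fin n) (Fin n) ℂ) z = z • 1 :=
      Algebra.algebraMap_eq_smul_one z
    rw [halg, Matrix.isUnit_iff_isUnit_det, ← eval_cp]
    exact (isUnit_iff_ne_zero).mpr h
  rw [hchar, Polynomial.eval_prod] at hdet
  obtain ⟨i, _, hi⟩ := Finset.prod_eq_zero_iff.mp hdet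
  simp only [eval_sub, eval_X, eval_C, sub_eq_zero] at hi
  subst hi
  rw [← ENNReal.ofReal_coe_nnreal, coe_nnnorm]
  exact ENNReal.ofReal_le_ofReal (hl i)

lemma perron_eigenvector {n : ℕ} (hn : 0 < n) (lam : Fin n → ℂ)
    (M : Matrix (Fin n) (Fin n) ℝ) (hnn : ∀ i j, 0 ≤ M i j)
    (hchar : (M.map Complex.ofReal).charpoly = ∏ i, (X - C (lam i)))
    (l1 : ℝ) (hl1 : lam ⟨0, hn⟩ = (l1 : ℂ))
    (hper : ∀ i, ‖lam i‖ ≤ l1) :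
    ∃ v : Fin n → ℝ, (∀ i, 0 ≤ v i) ∧ (∑ i, v i) = 1 ∧ M *ᵥ v = l1 • v := by
  set A := M.map Complex.ofReal with hA
  have hl1nn : 0 ≤ l1 := le_trans (norm_nonneg _) (hper ⟨0, hn⟩)
  have hsrle : spectralRadius ℂ A ≤ ENNReal.ofReal l1 :=
    spectralRadius_le_of_charpoly lam A hchar l1 hper
  set t : ℕ → ℝ := fun k => l1 + ((k : ℝ) + 1)⁻¹ with ht
  have htpos : ∀ k, 0 < t k := fun k => by positivity
  have htgt : ∀ k, l1 < t k := fun k => by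
    simp only [ht, lt_add_iff_pos_right]; positivity
  have hsr : ∀ k, spectralRadius ℂ A < ENNReal.ofReal (t k) := fun k =>
    lt_of_le_of_lt hsrle (by
      rw [ENNReal.ofReal_lt_ofReal_iff (htpos k)]
      exact htgt k)
  choose R hRnn hR1 hR2 using fun k => resolvent_nonneg M hnn (t k) (htpos k) (hsr k)
  set σ : ℕ → ℝ := fun k => ∑ i, ∑ j, R k i j with hσ
  have hσnn : ∀ k, 0 ≤ σ k := fun k =>
    Finset.sum_nonneg fun i _ => Finset.sum_nonneg fun j _ => hRnn k i j
  have hentry_le : ∀ k i j, R k i j ≤ σ k := by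
    intro k i j
    calc R k i j ≤ ∑ j', R k i j' :=
          Finset.single_le_sum (fun j' _ => hRnn k i j') (Finset.mem_univ j)
      _ ≤ σ k := Finset.single_le_sum
          (fun i' _ => Finset.sum_nonneg fun j' _ => hRnn k i' j') (Finset.mem_univ i)
  have hdetl1 : ((l1 : ℝ) • (1 : Matrix (Fin n) (Fin n) ℝ) - M).det = 0 := by
    have hmap0 : (((l1 : ℝ) • (1 : Matrix (Fin n) (Fin n) ℝ) - M).det : ℂ)
        = (((l1 : ℝ) • (1 : Matrix (Fin n) (Fin n) ℝ) - M).map Complex.ofReal).det :=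
      RingHom.map_det Complex.ofRealHom _
    have hmapdet : (((l1 : ℝ) • (1 : Matrix (Fin n) (Fin n) ℝ) - M).det : ℂ)
        = ((l1 : ℂ) • (1 : Matrix (Fin n) (Fin n) ℂ) - A).det := by
      rw [hmap0]
      congr 1
      ext i j
      simp only [Matrix.map_apply, Matrix.sub_apply, Matrix.smul_apply, Matrix.one_apply, hA]
      split_ifs <;> simp [smul_eq_mul] <;> push_cast <;> ring
    have : ((l1 : ℂ) • (1 : Matrix (Fin n) (Fin n) ℂ) - A).det = 0 := by
      rw [← eval_cp, hchar, Polynomial.eval_prod]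
      apply Finset.prod_eq_zero (Finset.mem_univ ⟨0, hn⟩)
      simp [hl1]
    exact_mod_cast hmapdet.trans this
  -- σ tends to infinity
  have hσtop : Filter.Tendsto σ Filter.atTop Filter.atTop := by
    by_contra hcon
    rw [Filter.tendsto_atTop] at hcon
    push_neg at hcon
    obtain ⟨b, hb⟩ := hcon
    have hfreq : ∃ᶠ k in Filter.atTop, σ k < b := by
      exact hb
    obtain ⟨φ, hφmono, hφ⟩ := Filter.extraction_of_frequently_atTop hfreq
    set Rφ : ℕ → (Fin n → Fin n → ℝ) := fun k => fun i j => R (φ k) i j with hRφ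
    have hmem : ∀ k, Rφ k ∈ Set.Icc (0 : Fin n → Fin n → ℝ) (fun _ _ => b) := by
      intro k
      constructor
      · intro i; intro j; exact hRnn (φ k) i j
      · intro i; intro j; exact le_of_lt (lt_of_le_of_lt (hentry_le (φ k) i j) (hφ k))
    obtain ⟨L, _, ψ, hψmono, hconv⟩ := (isCompact_Icc).tendsto_subseq hmem
    have hLmul : (Matrix.of L) * ((l1 : ℝ) • (1 : Matrix (Fin n) (Fin n) ℝ) - M) = 1 := by
      ext i m
      have hcomp : ∀ i j, Filter.Tendsto (fun k => R (φ (ψ k)) i j)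
          Filter.atTop (nhds (L i j)) := by
        intro i j
        have h1 := hconv
        rw [tendsto_pi_nhds] at h1
        have h2 := h1 i
        rw [tendsto_pi_nhds] at h2
        exact h2 j
      have htt : Filter.Tendsto (fun k => t (φ (ψ k))) Filter.atTop (nhds l1) := by
        have hbase : Filter.Tendsto t Filter.atTop (nhds l1) := by
          have : Filter.Tendsto (fun k : ℕ => ((k : ℝ) + 1)⁻¹) Filter.atTop (nhds 0) :=
            tendsto_one_div_add_atTop_nhds_zero_nat.congr (by intro k; rw [one_div])
          simpa [ht] using Filter.Tendsto.const_add l1 this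
        exact hbase.comp ((hφmono.comp hψmono).tendsto_atTop)
      have hlim : Filter.Tendsto
          (fun k => (R (φ (ψ k)) * (t (φ (ψ k)) • 1 - M)) i m)
          Filter.atTop (nhds (((Matrix.of L) * ((l1 : ℝ) • 1 - M)) i m)) := by
        simp only [Matrix.mul_apply, Matrix.sub_apply, Matrix.smul_apply, Matrix.one_apply]
        apply tendsto_finset_sum
        intro j _
        apply Filter.Tendsto.mul (hcomp i j)
        apply Filter.Tendsto.sub _ tendsto_const_nhds
        split_ifs
        · simpa using htt.mul_const 1
        · simpa using htt.mul_const 0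
      have hconst : ∀ k, (R (φ (ψ k)) * (t (φ (ψ k)) • 1 - M)) i m
          = (1 : Matrix (Fin n) (Fin n) ℝ) i m := fun k => by rw [hR1]
      rw [Filter.tendsto_congr hconst] at hlim
      exact (tendsto_nhds_unique tendsto_const_nhds hlim).symm
    have : ((l1 : ℝ) • (1 : Matrix (Fin n) (Fin n) ℝ) - M).det ≠ 0 := by
      intro h0
      have := congrArg Matrix.det hLmul
      rw [Matrix.det_mul, h0, mul_zero] at this
      simp at this
    exact this hdetl1
  -- positivity of σ
  have hσpos : ∀ k, 0 < σ k := by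
    intro k
    rcases (hσnn k).lt_or_eq with h | h
    · exact h
    · exfalso
      have hall : ∀ i j, R k i j = 0 := by
        intro i j
        have h1 : ∑ i, ∑ j, R k i j = 0 := h.symm
        have h2 := (Finset.sum_eq_zero_iff_of_nonneg
          (fun i _ => Finset.sum_nonneg fun j _ => hRnn k i j)).mp h1 i (Finset.mem_univ i)
        exact (Finset.sum_eq_zero_iff_of_nonneg (fun j _ => hRnn k i j)).mp
          h2 j (Finset.mem_univ j)
      have := congrFun (congrFun (hR1 k) ⟨0, hn⟩) ⟨0, hn⟩
      rw [Matrix.mul_apply] at this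
      simp only [hall, zero_mul, Finset.sum_const_zero, Matrix.one_apply_eq] at this
      exact zero_ne_one this
  -- normalized vectors
  set w : ℕ → (Fin n → ℝ) := fun k => (σ k)⁻¹ • (R k *ᵥ (fun _ => (1 : ℝ))) with hw
  have hwsum : ∀ k, ∑ i, w k i = 1 := by
    intro k
    simp only [hw, Pi.smul_apply, smul_eq_mul, ← Finset.mul_sum]
    rw [show ∑ i, (R k *ᵥ (fun _ => (1:ℝ))) i = σ k by
      simp [Matrix.mulVec, dotProduct, hσ]]
    exact inv_mul_cancel₀ (hσpos k).ne'
  have hwnn : ∀ k i, 0 ≤ w k i := by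
    intro k i
    have h0 : 0 ≤ (R k *ᵥ (fun _ => (1 : ℝ))) i := by
      simp only [Matrix.mulVec, dotProduct]
      exact Finset.sum_nonneg fun j _ => mul_nonneg (hRnn k i j) zero_le_one
    simp only [hw, Pi.smul_apply, smul_eq_mul]
    exact mul_nonneg (inv_nonneg.mpr (hσnn k)) h0
  have hwle : ∀ k, w k ∈ Set.Icc (0 : Fin n → ℝ) (fun _ => 1) := by
    intro k
    refine ⟨fun i => hwnn k i, fun i => ?_⟩
    calc w k i ≤ ∑ i', w k i' :=
          Finset.single_le_sum (fun i' _ => hwnn k i') (Finset.mem_univ i)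
      _ = 1 := hwsum k
  obtain ⟨v, hvK, ψ, hψmono, hconv⟩ := (isCompact_Icc).tendsto_subseq hwle
  have hcomp : ∀ i, Filter.Tendsto (fun k => w (ψ k) i) Filter.atTop (nhds (v i)) := by
    intro i
    rw [tendsto_pi_nhds] at hconv
    exact hconv i
  -- equation: t k * w k i - (M *ᵥ w k) i = (σ k)⁻¹
  have heqn : ∀ k i, t k * w k i - (M *ᵥ w k) i = (σ k)⁻¹ := by
    intro k i
    have h1 : (t k • 1 - M) *ᵥ (R k *ᵥ (fun _ => (1:ℝ))) = (fun _ => (1:ℝ)) := by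
      rw [Matrix.mulVec_mulVec, hR2 k, Matrix.one_mulVec]
    have h2 : (t k • 1 - M) *ᵥ (w k) = (σ k)⁻¹ • (fun _ => (1:ℝ)) := by
      rw [hw, Matrix.mulVec_smul, h1]
    have h3 := congrFun h2 i
    rw [Matrix.sub_mulVec] at h3
    simp only [Pi.sub_apply, Pi.smul_apply, smul_eq_mul, mul_one] at h3
    rw [← h3]
    congr 1
    rw [Matrix.smul_mulVec, Matrix.one_mulVec]
    simp
  have hσinv : Filter.Tendsto (fun k => (σ (ψ k))⁻¹) Filter.atTop (nhds 0) :=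
    (tendsto_inv_atTop_zero).comp (hσtop.comp hψmono.tendsto_atTop)
  have htt : Filter.Tendsto (fun k => t (ψ k)) Filter.atTop (nhds l1) := by
    have hbase : Filter.Tendsto t Filter.atTop (nhds l1) := by
      have : Filter.Tendsto (fun k : ℕ => ((k : ℝ) + 1)⁻¹) Filter.atTop (nhds 0) :=
        tendsto_one_div_add_atTop_nhds_zero_nat.congr (by intro k; rw [one_div])
      simpa [ht] using Filter.Tendsto.const_add l1 this
    exact hbase.comp hψmono.tendsto_atTop
  have hveq : M *ᵥ v = l1 • v := by
    funext i
    have hlhs : Filter.Tendsto (fun k => t (ψ k) * w (ψ k) i - (M *ᵥ w (ψ k)) i)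
        Filter.atTop (nhds (l1 * v i - (M *ᵥ v) i)) := by
      apply Filter.Tendsto.sub (htt.mul (hcomp i))
      simp only [Matrix.mulVec, dotProduct]
      exact tendsto_finset_sum _ fun j _ => (tendsto_const_nhds).mul (hcomp j)
    rw [Filter.tendsto_congr (fun k => heqn (ψ k) i)] at hlhs
    have := tendsto_nhds_unique hlhs hσinv
    have h5 : l1 * v i = (M *ᵥ v) i := by linarith
    simp only [Pi.smul_apply, smul_eq_mul]
    exact h5.symm
  have hvsum : ∑ i, v i = 1 := by
    have hlhs : Filter.Tendsto (fun k => ∑ i, w (ψ k) i) Filter.atTop (nhds (∑ i, v i)) :=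
      tendsto_finset_sum _ fun i _ => hcomp i
    rw [Filter.tendsto_congr (fun k => hwsum (ψ k))] at hlhs
    exact tendsto_nhds_unique hlhs tendsto_const_nhds
  exact ⟨v, fun i => hvK.1 i, hvsum, hveq⟩

end Analytic

theorem perron_perturbation_centrosymmetric (n : ℕ) (hn : 0 < n) (lam : Fin n → ℂ)
    (him : (lam ⟨0, hn⟩).im = 0)
    (hper : ∀ i, ‖lam i‖ ≤ (lam ⟨0, hn⟩).re)
    (M : Matrix (Fin n) (Fin n) ℝ)
    (hc : Jmat n * M * Jmat n = M) (hnn : ∀ i j, 0 ≤ M i j)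
    (hchar : (M.map Complex.ofReal).charpoly = ∏ i, (X - C (lam i)))
    (ε : ℝ) (hε : 0 < ε) :
    ∃ M' : Matrix (Fin n) (Fin n) ℝ,
      Jmat n * M' * Jmat n = M' ∧ (∀ i j, 0 ≤ M' i j) ∧
      (M'.map Complex.ofReal).charpoly =
        ∏ i, (X - C (Function.update lam ⟨0, hn⟩ (lam ⟨0, hn⟩ + (ε : ℂ)) i)) := by
  set i0 : Fin n := ⟨0, hn⟩ with hi0
  set l1 : ℝ := (lam i0).re with hl1def
  have hl1c : lam i0 = (l1 : ℂ) := by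
    apply Complex.ext <;> simp [hl1def, him]
  -- Perron eigenvector
  obtain ⟨v, hvnn, hvsum, hveq⟩ := perron_eigenvector hn lam M hnn hchar l1 hl1c hper
  -- J basic facts
  have hJJ : Jmat n * Jmat n = 1 := by
    ext i j
    rw [Jmat_mul_apply]
    show (if ((i.rev : ℕ) + (j : ℕ) = n - 1) then (1:ℝ) else 0) = _
    rw [Matrix.one_apply]
    by_cases h : j = i
    · subst h
      have h2 : ((j.rev : ℕ) + (j : ℕ) = n - 1) := by rw [Fin.val_rev]; have := j.2; omega
      rw [if_pos h2, if_pos rfl]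
    · have h2 : ¬ ((i.rev : ℕ) + (j : ℕ) = n - 1) := by
        intro hcon
        apply h
        ext
        rw [Fin.val_rev] at hcon
        have := i.2; have := j.2; omega
      rw [if_neg h2, if_neg (Ne.symm h)]
  have hJM : Jmat n * M = M * Jmat n := by
    conv_lhs => rw [← hc]
    rw [← mul_assoc, ← mul_assoc, hJJ, one_mul]
  -- symmetrized eigenvector u
  set u : Fin n → ℝ := fun i => v i + v i.rev with hu
  have hunn : ∀ i, 0 ≤ u i := fun i => add_nonneg (hvnn i) (hvnn i.rev)
  have husym : ∀ i, u i.rev = u i := by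
    intro i; simp only [hu, Fin.rev_rev]; ring
  have hMrev : M *ᵥ (fun i => v i.rev) = l1 • (fun i => v i.rev) := by
    have h1 : (fun i => v i.rev) = Jmat n *ᵥ v := by
      funext i; rw [Jmat_mulVec]
    rw [h1, Matrix.mulVec_mulVec, ← hJM, ← Matrix.mulVec_mulVec, hveq,
      Matrix.mulVec_smul]
  have hMu : M *ᵥ u = l1 • u := by
    have : u = v + (fun i => v i.rev) := by funext i; simp [hu]
    rw [this, Matrix.mulVec_add, hveq, hMrev]
    funext i; simp; ring
  -- positivity of u ⬝ᵥ u
  have huex : ∃ i, 0 < u i := by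
    have : ∃ i, v i ≠ 0 := by
      by_contra hcon
      push_neg at hcon
      rw [Finset.sum_congr rfl (fun i _ => hcon i)] at hvsum
      simp at hvsum
    obtain ⟨i, hi⟩ := this
    exact ⟨i, lt_of_lt_of_le (lt_of_le_of_ne (hvnn i) (Ne.symm hi))
      (by simp only [hu]; nlinarith [hvnn i.rev])⟩
  set s : ℝ := u ⬝ᵥ u with hs
  have hspos : 0 < s := by
    obtain ⟨i, hi⟩ := huex
    calc (0:ℝ) < u i * u i := by positivity
      _ ≤ s := Finset.single_le_sum
          (fun j _ => mul_nonneg (hunn j) (hunn j)) (Finset.mem_univ i)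
  set c : ℝ := ε / s with hcdef
  have hcpos : 0 < c := div_pos hε hspos
  set V : Matrix (Fin n) (Fin n) ℝ := Matrix.vecMulVec u u with hV
  refine ⟨M + c • V, ?_, ?_, ?_⟩
  · -- centrosymmetric
    have hcM : ∀ i j, M i.rev j.rev = M i j := by
      intro i j
      have h := congrFun (congrFun hc i) j
      rwa [mul_Jmat_apply, Jmat_mul_apply] at h
    ext i j
    rw [mul_Jmat_apply, Jmat_mul_apply]
    simp only [Matrix.add_apply, Matrix.smul_apply, hV, Matrix.vecMulVec_apply,
      husym, hcM i j, smul_eq_mul]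
  · intro i j
    simp only [Matrix.add_apply, Matrix.smul_apply, hV, Matrix.vecMulVec_apply, smul_eq_mul]
    have := hunn i; have := hunn j; have := hnn i j
    positivity
  · -- charpoly
    set A : Matrix (Fin n) (Fin n) ℂ := M.map Complex.ofReal with hA
    set uc : Fin n → ℂ := fun i => (u i : ℂ) with huc
    set Vc : Matrix (Fin n) (Fin n) ℂ := Matrix.vecMulVec uc uc with hVc
    have hA'eq : (M + c • V).map Complex.ofReal = A + (c : ℂ) • Vc := by
      ext i j
      simp only [Matrix.map_apply, Matrix.add_apply, Matrix.smul_apply, hV, hVc,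
        Matrix.vecMulVec_apply, smul_eq_mul, hA, huc]
      push_cast
      ring
    rw [hA'eq]
    have hAu : A *ᵥ uc = ((l1 : ℂ)) • uc := by
      funext i
      have h1 := congrFun hMu i
      simp only [Matrix.mulVec, dotProduct, Pi.smul_apply, smul_eq_mul] at h1 ⊢
      simp only [hA, huc, Matrix.map_apply]
      push_cast
      exact_mod_cast congrArg (Complex.ofReal) h1
    apply Polynomial.eq_of_infinite_eval_eq
    apply Set.Infinite.mono (s := (Set.range lam ∪ {(l1:ℂ)})ᶜ)
    · intro x hx
      simp only [Set.mem_compl_iff, Set.mem_union, Set.mem_range, Set.mem_singleton_iff,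
        not_or, not_exists] at hx
      obtain ⟨hx1, hx2⟩ := hx
      have hxl1 : x - (l1:ℂ) ≠ 0 := sub_ne_zero.mpr hx2
      show _ = _
      set B : Matrix (Fin n) (Fin n) ℂ := x • 1 - A with hB
      have hBu : B *ᵥ uc = (x - (l1:ℂ)) • uc := by
        rw [hB, Matrix.sub_mulVec, hAu, Matrix.smul_mulVec, Matrix.one_mulVec, sub_smul]
      have hBV : B * Vc = (x - (l1:ℂ)) • Vc := by
        rw [hVc, Matrix.vecMulVec_eq Unit, ← Matrix.mul_assoc, ← Matrix.replicateCol_mulVec, hBu,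
          Matrix.replicateCol_smul, Matrix.smul_mul]
      set d : ℂ := (c : ℂ) / (x - (l1:ℂ)) with hd
      have hfact : x • 1 - (A + (c:ℂ) • Vc) = B * (1 - d • Vc) := by
        rw [Matrix.mul_sub, mul_one, Algebra.mul_smul_comm, hBV, smul_smul, hd,
          div_mul_cancel₀ _ hxl1]
        rw [hB]
        abel
      have hdet2 : (1 - d • Vc).det = 1 - d * (s : ℂ) := by
        have h1 : (1 : Matrix (Fin n) (Fin n) ℂ) - d • Vc
            = 1 + Matrix.replicateCol Unit ((-d) • uc) * Matrix.replicateRow Unit uc := by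
          rw [Matrix.replicateCol_smul, Matrix.smul_mul, ← Matrix.vecMulVec_eq, ← hVc, neg_smul,
            ← sub_eq_add_neg]
        rw [h1, Matrix.det_one_add_replicateCol_mul_replicateRow]
        rw [dotProduct_smul]
        have hss : uc ⬝ᵥ uc = (s : ℂ) := by
          simp only [huc, dotProduct, hs]
          push_cast
          ring
        rw [hss]
        simp
        ring
      have hchareval : ∀ X : Matrix (Fin n) (Fin n) ℂ, (X.charpoly).eval x
          = (x • 1 - X).det := fun X => eval_cp X x
      rw [hchareval, hfact, Matrix.det_mul, hdet2]
      have hdetB : B.det = ∏ i, (x - lam i) := by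
        rw [hB, ← eval_cp, hchar, Polynomial.eval_prod]
        apply Finset.prod_congr rfl
        intro i _
        simp
      rw [hdetB]
      -- split at i0
      have hsplit1 : ∏ i, (x - lam i) = (x - lam i0) * ∏ i ∈ Finset.univ.erase i0, (x - lam i) :=
        (Finset.mul_prod_erase Finset.univ _ (Finset.mem_univ i0)).symm
      have hsplit2 : (Polynomial.eval x (∏ i, (X - C (Function.update lam i0 (lam i0 + (ε:ℂ)) i))))
          = (x - (lam i0 + ε)) * ∏ i ∈ Finset.univ.erase i0, (x - lam i) := by
        rw [Polynomial.eval_prod]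
        rw [← Finset.mul_prod_erase Finset.univ _ (Finset.mem_univ i0)]
        congr 1
        · simp [Function.update_self]
        · apply Finset.prod_congr rfl
          intro i hi
          rw [Function.update_of_ne (Finset.ne_of_mem_erase hi)]
          simp
      rw [hsplit1, hsplit2]
      have hds : d * (s : ℂ) = (ε : ℂ) / (x - (l1:ℂ)) := by
        have hsne : (s : ℂ) ≠ 0 := by exact_mod_cast hspos.ne'
        rw [hd, hcdef]
        push_cast
        field_simp
      rw [hds, hl1c]
      field_simp
      ring
    · exact Set.Finite.infinite_compl ((Set.finite_range lam).union (Set.finite_singleton _))
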